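/- Let E be a finite-dimensional real normed vector space and let D be an ℝ-linear subspace of the space of maps E → E all of whose elements are C^∞ vector fields. Define D¹ = D + span_ℝ{[v, w] : v, w ∈ D}, where [·,·] is the Lie bracket of vector fields. If c ∈ D satisfies [c, v] ∈ D for every v ∈ D (i.e., c is a Cauchy characteristic vector field of D), then [c, w] ∈ D¹ for every w ∈ D¹ (i.e., c is also a Cauchy characteristic vector field of the derived flag D¹). In particular C(D) ⊆ C(D^{(1)}). -/

import Mathlib

open VectorField

/-- The set of smooth vector fields whose bracket with `c` lies in a given submodule `M`
forms a submodule, provided `c` is differentiable. -/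
def charSubmodule (E : Type*) [NormedAddCommGroup E] [NormedSpace ℝ E]
    (c : E → E) (hc : ContDiff ℝ (⊤ : ℕ∞) c) (M : Submodule ℝ (E → E)) :
    Submodule ℝ (E → E) where
  carrier := {w | ContDiff ℝ (⊤ : ℕ∞) w ∧ VectorField.lieBracket ℝ c w ∈ M}
  zero_mem' := by
    refine ⟨contDiff_const, ?_⟩
    have : VectorField.lieBracket ℝ c (0 : E → E) = 0 := by
      ext x
      simp [VectorField.lieBracket]
    rw [this]; exact M.zero_mem
  add_mem' := by
    rintro w₁ w₂ ⟨h₁s, h₁⟩ ⟨h₂s, h₂⟩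
    refine ⟨h₁s.add h₂s, ?_⟩
    have : VectorField.lieBracket ℝ c (w₁ + w₂) =
        VectorField.lieBracket ℝ c w₁ + VectorField.lieBracket ℝ c w₂ := by
      ext x
      exact VectorField.lieBracket_add_right (h₁s.differentiable (by simp) x)
        (h₂s.differentiable (by simp) x)
    rw [this]; exact M.add_mem h₁ h₂
  smul_mem' := by
    rintro a w ⟨hs, h⟩
    refine ⟨hs.const_smul a, ?_⟩
    have : VectorField.lieBracket ℝ c (a • w) = a • VectorField.lieBracket ℝ c w := by
      ext x
      exact VectorField.lieBracket_const_smul_right (hs.differentiable (by simp) x)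
    rw [this]; exact M.smul_mem a h

/-- Let `E` be a finite-dimensional real normed vector space, and let `D` be an ℝ-linear
subspace of maps `E → E` all of whose elements are `C^∞` vector fields. Let
`D¹ = D + span{[v, w] : v, w ∈ D}` be the (first) derived flag of `D`. If `c ∈ D` is a
Cauchy characteristic vector field of `D`, i.e. `[c, v] ∈ D` for every `v ∈ D`, then `c`
is also a Cauchy characteristic vector field of `D¹`: `[c, w] ∈ D¹` for every `w ∈ D¹`.
In particular `C(D) ⊆ C(D^{(1)})`. -/
theorem stmt19 (E : Type*) [NormedAddCommGroup E] [NormedSpace ℝ E] [FiniteDimensional ℝ E]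
    (D : Submodule ℝ (E → E)) (hD : ∀ v ∈ D, ContDiff ℝ (⊤ : ℕ∞) v)
    (c : E → E) (hc : c ∈ D)
    (hcChar : ∀ v ∈ D, VectorField.lieBracket ℝ c v ∈ D) :
    ∀ w ∈ D ⊔ Submodule.span ℝ
        {u : E → E | ∃ v ∈ D, ∃ v' ∈ D, u = VectorField.lieBracket ℝ v v'},
      VectorField.lieBracket ℝ c w ∈ D ⊔ Submodule.span ℝ
        {u : E → E | ∃ v ∈ D, ∃ v' ∈ D, u = VectorField.lieBracket ℝ v v'} := by
  set S : Set (E → E) :=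
    {u : E → E | ∃ v ∈ D, ∃ v' ∈ D, u = VectorField.lieBracket ℝ v v'} with hS
  set M : Submodule ℝ (E → E) := D ⊔ Submodule.span ℝ S with hM
  have hcS : ContDiff ℝ (⊤ : ℕ∞) c := hD c hc
  set T : Submodule ℝ (E → E) := charSubmodule E c hcS M with hT
  have hDT : D ≤ T := by
    intro v hv
    exact ⟨hD v hv, Submodule.mem_sup_left (hcChar v hv)⟩
  have hST : S ⊆ T := by
    rintro u ⟨v, hv, v', hv', rfl⟩
    constructor
    · exact ((hD v hv).lieBracket_vectorField (hD v' hv') (by exact_mod_cast le_rfl))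
    · have jac : VectorField.lieBracket ℝ c (VectorField.lieBracket ℝ v v') =
          VectorField.lieBracket ℝ (VectorField.lieBracket ℝ c v) v'
          + VectorField.lieBracket ℝ v (VectorField.lieBracket ℝ c v') := by
        ext x
        exact VectorField.leibniz_identity_lieBracket
          (by rw [minSmoothness_of_isRCLikeNormedField])
          ((hD c hc).of_le (by norm_cast)).contDiffAt
          ((hD v hv).of_le (by norm_cast)).contDiffAt
          ((hD v' hv').of_le (by norm_cast)).contDiffAt
      rw [jac]
      refine M.add_mem ?_ ?_
      · exact Submodule.mem_sup_right (Submodule.subset_span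
          ⟨_, hcChar v hv, v', hv', rfl⟩)
      · exact Submodule.mem_sup_right (Submodule.subset_span
          ⟨v, hv, _, hcChar v' hv', rfl⟩)
  have hMT : M ≤ T := by
    rw [hM]
    exact sup_le hDT ((Submodule.span_le).2 hST)
  intro w hw
  exact (hMT hw).2
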